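/- Define, for an integer n ≥ 2, an integer i with 0 ≤ i ≤ n, and reals t, t' ≥ 0, C_n(i,t,t') := n^{−2}·( (i(i−1)/2)·t + ((n−i)(n−i−1)/2)·t' + (i²+i)/2 − i·H_i + ((n−i)²+(n−i))/2 − (n−i)·H_{n−i} − (n²−n)/2 + n·H_n ), where H_m := ∑_{k=1}^{m} 1/k and H_0 := 0, and define C(x,t,t') := (1/2)x²t + (1/2)(1−x)²t' − x(1−x) for x ∈ [0,1]. Then there exists a constant K > 0 such that for every integer n ≥ 2, all reals t, t' ≥ 0 and every x ∈ [0,1], |C_n(⌈nx⌉, t, t') − C(x,t,t')| ≤ (log n)/n + K·(1 + t + t')/n. -/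

import Mathlib

/-- The `m`-th harmonic number, with `H_0 = 0`. -/
noncomputable def harm (m : ℕ) : ℝ := ∑ k ∈ Finset.Icc 1 m, 1 / (k : ℝ)

/-- The toll function `C_n(i,t,t')` of the recursive approximation of the normalized
continuous cophenetic index of a Yule tree without root edge. -/
noncomputable def Ccont (n i : ℕ) (t t' : ℝ) : ℝ :=
  (((i : ℝ) * ((i : ℝ) - 1) / 2) * t +
      (((n : ℝ) - (i : ℝ)) * ((n : ℝ) - (i : ℝ) - 1) / 2) * t' +
      ((i : ℝ) ^ 2 + (i : ℝ)) / 2 - (i : ℝ) * harm i +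
      (((n : ℝ) - (i : ℝ)) ^ 2 + ((n : ℝ) - (i : ℝ))) / 2 -
      ((n : ℝ) - (i : ℝ)) * harm (n - i) - ((n : ℝ) ^ 2 - (n : ℝ)) / 2 +
      (n : ℝ) * harm n) /
    (n : ℝ) ^ 2

lemma harm_split {m n : ℕ} (h : m ≤ n) :
    harm n = harm m + ∑ k ∈ Finset.Ioc m n, 1 / (k : ℝ) := by
  unfold harm
  rw [show Finset.Icc 1 n = Finset.Ioc 0 n from Finset.Icc_add_one_left_eq_Ioc 0 n,
      show Finset.Icc 1 m = Finset.Ioc 0 m from Finset.Icc_add_one_left_eq_Ioc 0 m,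
      Finset.sum_Ioc_consecutive _ (Nat.zero_le m) h]

lemma harm_mono {m n : ℕ} (h : m ≤ n) : harm m ≤ harm n := by
  rw [harm_split h]
  have : 0 ≤ ∑ k ∈ Finset.Ioc m n, 1 / (k : ℝ) := by
    apply Finset.sum_nonneg; intro k hk; positivity
  linarith

lemma harm_gap {m n : ℕ} (h : m ≤ n) : (m : ℝ) * (harm n - harm m) ≤ (n : ℝ) - m := by
  have hs : harm n - harm m = ∑ k ∈ Finset.Ioc m n, 1 / (k : ℝ) := by
    rw [harm_split h]; ring
  have hb : ∑ k ∈ Finset.Ioc m n, 1 / (k : ℝ) ≤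
      (Finset.Ioc m n).card • (1 / ((m : ℝ) + 1)) := by
    apply Finset.sum_le_card_nsmul
    intro k hk
    have hk1 : m + 1 ≤ k := (Finset.mem_Ioc.mp hk).1
    have hkk : ((m : ℝ) + 1) ≤ (k : ℝ) := by exact_mod_cast hk1
    have hm : (0:ℝ) < (m:ℝ) + 1 := by positivity
    exact one_div_le_one_div_of_le hm hkk
  rw [Nat.card_Ioc, nsmul_eq_mul, Nat.cast_sub h] at hb
  have hm0 : (0:ℝ) ≤ m := Nat.cast_nonneg m
  have hmn : (m : ℝ) ≤ n := by exact_mod_cast h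
  have hm1 : (0:ℝ) < (m:ℝ) + 1 := by positivity
  have h2 : (m:ℝ) * (harm n - harm m) ≤ (m:ℝ) * (((n:ℝ) - m) * (1 / ((m:ℝ)+1))) := by
    rw [hs]
    exact mul_le_mul_of_nonneg_left hb hm0
  have key : (m:ℝ) * (((n:ℝ) - m) * (1 / ((m:ℝ)+1))) ≤ (n:ℝ) - m := by
    rw [mul_one_div, mul_div_assoc' (m:ℝ), div_le_iff₀ hm1]
    nlinarith
  linarith

lemma b1u {N I x : ℝ} (hI0 : 0 ≤ I) (hx0 : 0 ≤ x) (hx1 : x ≤ 1) (hN : 0 ≤ N)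
    (h2 : I ≤ N * x + 1) : I * I - I - N ^ 2 * x ^ 2 ≤ 2 * N := by
  nlinarith [mul_le_mul_of_nonneg_left h2 hI0,
    mul_le_mul_of_nonneg_right h2 (mul_nonneg hN hx0),
    mul_nonneg hN (by linarith : (0:ℝ) ≤ 1 - x)]

lemma b1l {N I x : ℝ} (hI0 : 0 ≤ I) (hNx0 : 0 ≤ N * x) (hIle : I ≤ N)
    (h1 : N * x ≤ I) : -(2 * N) ≤ I * I - I - N ^ 2 * x ^ 2 := by
  nlinarith [mul_le_mul h1 h1 hNx0 hI0]

lemma b2u {N J x : ℝ} (hN : 0 ≤ N) (hJ0 : 0 ≤ J) (hJ2 : J ≤ N * (1 - x)) :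
    J * J - J - N ^ 2 * (1 - x) ^ 2 ≤ 3 * N := by
  nlinarith [mul_le_mul hJ2 hJ2 hJ0 (hJ0.trans hJ2)]

lemma b2l {N J x : ℝ} (hJ0 : 0 ≤ J) (hp1 : N * (1 - x) - J ≤ 1)
    (hp2 : N * (1 - x) + J ≤ 2 * N) (hnn : 0 ≤ N * (1 - x)) :
    -(3 * N) ≤ J * J - J - N ^ 2 * (1 - x) ^ 2 := by
  nlinarith [mul_le_mul hp1 hp2 (by linarith) (by norm_num : (0:ℝ) ≤ 1)]

lemma b3u {N I x : ℝ} (hN : 0 ≤ N) (hx0 : 0 ≤ x) (hx1 : x ≤ 1)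
    (ha0 : 0 ≤ I - N * x) (ha1 : I - N * x ≤ 1) :
    I * (N - I) - N ^ 2 * (x * (1 - x)) ≤ 2 * N := by
  have hax : (I - N * x) * (1 - 2 * x) ≤ 1 := by
    nlinarith [mul_nonneg ha0 hx0]
  nlinarith [mul_le_mul_of_nonneg_left hax hN, sq_nonneg (I - N * x)]

lemma b3l {N I x : ℝ} (hN : 1 ≤ N) (hx0 : 0 ≤ x) (hx1 : x ≤ 1)
    (ha0 : 0 ≤ I - N * x) (ha1 : I - N * x ≤ 1) :
    -(2 * N) ≤ I * (N - I) - N ^ 2 * (x * (1 - x)) := by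
  have hax' : -1 ≤ (I - N * x) * (1 - 2 * x) := by
    nlinarith [mul_nonneg ha0 (by linarith : (0:ℝ) ≤ 1 - x)]
  have hasq : (I - N * x) ^ 2 ≤ 1 := by nlinarith
  nlinarith [mul_le_mul_of_nonneg_left hax' (by linarith : (0:ℝ) ≤ N)]

lemma c4u {N I Hn Hi Hj : ℝ} (e1 : I * (Hn - Hi) ≤ N - I)
    (e2 : (N - I) * (Hn - Hj) ≤ N - (N - I)) :
    N * Hn - I * Hi - (N - I) * Hj ≤ N := by nlinarith

lemma c4l {N I Hn Hi Hj : ℝ} (e1 : 0 ≤ I * (Hn - Hi))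
    (e2 : 0 ≤ (N - I) * (Hn - Hj)) :
    0 ≤ N * Hn - I * Hi - (N - I) * Hj := by nlinarith

/-- Uniform approximation of the continuous toll function `C_n(⌈nx⌉,t,t')` by its limit
`C(x,t,t') = (1/2)x²t + (1/2)(1−x)²t' − x(1−x)` at rate `log n / n + K(1+t+t')/n`. -/
theorem stmt17 :
    ∃ K : ℝ, 0 < K ∧ ∀ n : ℕ, 2 ≤ n → ∀ t t' : ℝ, 0 ≤ t → 0 ≤ t' →
      ∀ x : ℝ, x ∈ Set.Icc (0 : ℝ) 1 →
        |Ccont n ⌈(n : ℝ) * x⌉₊ t t' -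
            ((1 / 2) * x ^ 2 * t + (1 / 2) * (1 - x) ^ 2 * t' - x * (1 - x))| ≤
          Real.log n / n + K * (1 + t + t') / n := by
  refine ⟨4, by norm_num, ?_⟩
  intro n hn t t' ht ht' x hx
  obtain ⟨hx0, hx1⟩ := hx
  set i := ⌈(n : ℝ) * x⌉₊ with hi
  have hN : (2:ℝ) ≤ n := by exact_mod_cast hn
  have hNpos : (0:ℝ) < n := by linarith
  have hnx0 : (0:ℝ) ≤ (n:ℝ) * x := mul_nonneg hNpos.le hx0
  have h1 : (n:ℝ) * x ≤ i := Nat.le_ceil _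
  have h2 : (i:ℝ) ≤ (n:ℝ) * x + 1 := le_of_lt (Nat.ceil_lt_add_one hnx0)
  have hin : i ≤ n := by
    rw [hi, Nat.ceil_le]
    nlinarith
  have hIle : (i:ℝ) ≤ (n:ℝ) := by exact_mod_cast hin
  have hI0 : (0:ℝ) ≤ i := Nat.cast_nonneg i
  have hexp : (n:ℝ) * (1 - x) = (n:ℝ) - (n:ℝ) * x := by ring
  -- harmonic bounds
  have hHi := harm_gap hin
  have hHiNN : harm i ≤ harm n := harm_mono hin
  have hHj := harm_gap (Nat.sub_le n i)
  have hHjNN : harm (n - i) ≤ harm n := harm_mono (Nat.sub_le n i)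
  have hcast : ((n - i : ℕ) : ℝ) = (n:ℝ) - i := Nat.cast_sub hin
  rw [hcast] at hHj
  have hc4u : (n:ℝ) * harm n - (i:ℝ) * harm i - ((n:ℝ) - i) * harm (n - i) ≤ n :=
    c4u hHi (by linarith [hHj])
  have hc4l : 0 ≤ (n:ℝ) * harm n - (i:ℝ) * harm i - ((n:ℝ) - i) * harm (n - i) :=
    c4l (mul_nonneg hI0 (by linarith)) (mul_nonneg (by linarith) (by linarith))
  -- polynomial bounds
  have hJ0 : (0:ℝ) ≤ (n:ℝ) - i := by linarith
  have hc1u := b1u hI0 hx0 hx1 hNpos.le h2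
  have hc1l := b1l hI0 hnx0 hIle h1
  have hc2u := b2u hNpos.le hJ0 (by linarith : (n:ℝ) - i ≤ (n:ℝ) * (1 - x))
  have hc2l := b2l (N := (n:ℝ)) (x := x) hJ0 (by linarith) (by linarith) (by linarith)
  have hc3u := b3u (I := (i:ℝ)) hNpos.le hx0 hx1 (by linarith) (by linarith)
  have hc3l := b3l (I := (i:ℝ)) (by linarith : (1:ℝ) ≤ (n:ℝ)) hx0 hx1 (by linarith) (by linarith)
  -- products with t, t'
  have hd1u := mul_le_mul_of_nonneg_right hc1u ht
  have hd1l := mul_le_mul_of_nonneg_right hc1l ht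
  have hd2u := mul_le_mul_of_nonneg_right hc2u ht'
  have hd2l := mul_le_mul_of_nonneg_right hc2l ht'
  have hNt : (0:ℝ) ≤ (n:ℝ) * t := mul_nonneg hNpos.le ht
  have hNt' : (0:ℝ) ≤ (n:ℝ) * t' := mul_nonneg hNpos.le ht'
  -- single fraction
  have hN2 : (0:ℝ) < (n:ℝ) ^ 2 := by positivity
  have hdiff : Ccont n i t t' -
      ((1 / 2) * x ^ 2 * t + (1 / 2) * (1 - x) ^ 2 * t' - x * (1 - x)) =
      (((i:ℝ) * ((i:ℝ) - 1) / 2) * t + (((n:ℝ) - i) * ((n:ℝ) - i - 1) / 2) * t' +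
        ((i:ℝ) ^ 2 + i) / 2 - (i:ℝ) * harm i + (((n:ℝ) - i) ^ 2 + ((n:ℝ) - i)) / 2 -
        ((n:ℝ) - i) * harm (n - i) - ((n:ℝ) ^ 2 - n) / 2 + (n:ℝ) * harm n -
        (n:ℝ)^2 * ((1 / 2) * x ^ 2 * t + (1 / 2) * (1 - x) ^ 2 * t' - x * (1 - x))) / (n:ℝ) ^ 2 := by
    rw [Ccont, div_sub' hN2.ne']
  rw [hdiff, abs_div, abs_of_pos hN2, div_le_iff₀ hN2]
  have hdecomp : ((i:ℝ) * ((i:ℝ) - 1) / 2) * t + (((n:ℝ) - i) * ((n:ℝ) - i - 1) / 2) * t' +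
        ((i:ℝ) ^ 2 + i) / 2 - (i:ℝ) * harm i + (((n:ℝ) - i) ^ 2 + ((n:ℝ) - i)) / 2 -
        ((n:ℝ) - i) * harm (n - i) - ((n:ℝ) ^ 2 - n) / 2 + (n:ℝ) * harm n -
        (n:ℝ)^2 * ((1 / 2) * x ^ 2 * t + (1 / 2) * (1 - x) ^ 2 * t' - x * (1 - x)) =
      (1/2) * (((i:ℝ) * i - i - (n:ℝ)^2 * x^2) * t) +
      (1/2) * ((((n:ℝ) - i) * ((n:ℝ) - i) - ((n:ℝ) - i) - (n:ℝ)^2 * (1-x)^2) * t') +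
      ((n:ℝ)^2 * (x * (1-x)) - (i:ℝ) * ((n:ℝ) - i)) + (n:ℝ) +
      ((n:ℝ) * harm n - (i:ℝ) * harm i - ((n:ℝ) - i) * harm (n - i)) := by
    ring
  have hmain : |((i:ℝ) * ((i:ℝ) - 1) / 2) * t + (((n:ℝ) - i) * ((n:ℝ) - i - 1) / 2) * t' +
        ((i:ℝ) ^ 2 + i) / 2 - (i:ℝ) * harm i + (((n:ℝ) - i) ^ 2 + ((n:ℝ) - i)) / 2 -
        ((n:ℝ) - i) * harm (n - i) - ((n:ℝ) ^ 2 - n) / 2 + (n:ℝ) * harm n -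
        (n:ℝ)^2 * ((1 / 2) * x ^ 2 * t + (1 / 2) * (1 - x) ^ 2 * t' - x * (1 - x))|
      ≤ 4 * (1 + t + t') * n := by
    rw [abs_le, hdecomp]
    constructor
    · linarith
    · linarith
  refine hmain.trans ?_
  have e1 : 4 * (1 + t + t') / (n:ℝ) * (n:ℝ)^2 = 4 * (1 + t + t') * n := by
    field_simp
  have e2 : 0 ≤ Real.log n / (n:ℝ) * (n:ℝ)^2 := by
    have hl : 0 ≤ Real.log n := Real.log_nonneg (by linarith)
    positivity
  rw [add_mul, e1]
  linarith
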